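/- Let G^{A,B} be a biconed graph and T a spanning tree of G^{A,B}. Consider the spanning forest of G^{A,B}_red obtained from T by deleting the edges of T_0 and the vertex 0, and mark as roots the vertex 0̄ together with all connecting vertices of T. Then: every component of this forest contains at least one root; at most one component contains two roots; and if a component contains two roots, then one root lies in A and the other lies in Ā ∪ {0̄}. In other words, the result is a birooted forest of G^{A,B}_red. -/

import Mathlib

/-!
Formalization scaffold for "h-vectors of graphic matroids of biconed graphs".

A graph `G` (loops and parallel edges allowed) with vertex set `A ∪ B` is
modelled by an abstract finite edge type `E` with an endpoint map
`ends : E → Sym2 (Fin m ⊕ₗ Fin n)`, where `A = Fin m = {1,…,m}`,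
`Ā = B \ A = Fin n = {1̄,…,n̄}` and the finset `S ⊆ Fin m` records `A ∩ B`
(so `B = S ∪ Ā`).  The biconing `G^{A,B}` adds the two vertices `0` and `0̄`
and the edges `00̄`, `0a (a ∈ A)` and `0̄b (b ∈ B)`.
-/

namespace BiconedPaper

noncomputable section
open scoped Classical

/-! ### Walks in multigraphs presented by an endpoint map -/

/-- A walk in the multigraph with edge set `ε` and endpoint map `ends`. -/
inductive MWalk {ε ν : Type} (ends : ε → Sym2 ν) : ν → ν → Type
  | nil (u : ν) : MWalk ends u u
  | cons {u w : ν} (e : ε) (v : ν) (h : ends e = s(u, v)) (p : MWalk ends v w) :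
      MWalk ends u w

namespace MWalk

variable {ε ν : Type} {ends : ε → Sym2 ν}

/-- The list of edges traversed by a walk. -/
def edges : ∀ {u v : ν}, MWalk ends u v → List ε
  | _, _, nil _ => []
  | _, _, cons e _ _ p => e :: p.edges

/-- The list of vertices visited by a walk. -/
def support : ∀ {u v : ν}, MWalk ends u v → List ν
  | u, _, nil _ => [u]
  | u, _, cons _ _ _ p => u :: p.support

/-- A walk is a path if it visits no vertex twice. -/
def IsPath {u v : ν} (p : MWalk ends u v) : Prop := p.support.Nodup

/-- All edges of the walk belong to the edge set `F`. -/
def edgesIn {u v : ν} (p : MWalk ends u v) (F : Finset ε) : Prop :=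
  ∀ e ∈ p.edges, e ∈ F

/-- The number of "bridging" edges traversed by a walk, i.e. steps whose two
endpoints lie on different sides according to `sideF`. -/
def bridgeCount (sideF : ν → Bool) : ∀ {u v : ν}, MWalk ends u v → ℕ
  | _, _, nil _ => 0
  | u, _, cons _ v' _ p => (if sideF u = sideF v' then 0 else 1) + p.bridgeCount sideF

end MWalk

/-- `u` and `v` are joined by a walk all of whose edges lie in `F`. -/
def Reachable {ε ν : Type} (ends : ε → Sym2 ν) (F : Finset ε) (u v : ν) : Prop :=
  ∃ p : MWalk ends u v, p.edgesIn F

/-- An edge set is acyclic (a forest) iff removing any one of its edges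
disconnects the endpoints of that edge.  (In particular no loops and no
parallel pairs.) -/
def IsAcyclic {ε ν : Type} [DecidableEq ε] (ends : ε → Sym2 ν) (F : Finset ε) : Prop :=
  ∀ e ∈ F, ∀ u v : ν, ends e = s(u, v) → ¬ Reachable ends (F.erase e) u v

/-- A spanning tree: an acyclic edge set connecting every pair of vertices. -/
def IsSpanningTree {ε ν : Type} [DecidableEq ε] (ends : ε → Sym2 ν) (T : Finset ε) : Prop :=
  IsAcyclic ends T ∧ ∀ u v : ν, Reachable ends T u v

/-! ### Biconed graphs -/

/-- The data of a biconed graph `G^{A,B}`:  the graph `G` has vertex set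
`A ∪ B` with `A = Fin m`, `Ā = B \ A = Fin n`, `A ∩ B = S`, and abstract
edge set `E` (so loops and parallel edges are allowed). -/
structure BiconedGraph where
  m : ℕ
  n : ℕ
  E : Type
  fintypeE : Fintype E
  decEqE : DecidableEq E
  ends : E → Sym2 (Fin m ⊕ₗ Fin n)
  S : Finset (Fin m)

namespace BiconedGraph

variable (P : BiconedGraph)

instance : Fintype P.E := P.fintypeE
instance : DecidableEq P.E := P.decEqE

/-- The vertices of `G`, linearly ordered `1 < ⋯ < m < 1̄ < ⋯ < n̄`. -/
abbrev VG := Fin P.m ⊕ₗ Fin P.n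

/-- The vertices of `G^{A,B}_red`:  `⊥` is the vertex `0̄`, ordered
`0̄ < 1 < ⋯ < m < 1̄ < ⋯ < n̄`. -/
abbrev Vred := WithBot P.VG

/-- The vertices of `G^{A,B}`: `⊥` is `0`, ordered `0 < 0̄ < 1 < ⋯ < n̄`. -/
abbrev W := WithBot P.Vred

/-- The vertex `a ∈ A`. -/
def aVert (a : Fin P.m) : P.VG := toLex (Sum.inl a)
/-- The vertex `b ∈ Ā`. -/
def bVert (b : Fin P.n) : P.VG := toLex (Sum.inr b)
/-- Inclusion of the vertices of `G` into those of `G^{A,B}_red`. -/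
def liftV (x : P.VG) : P.Vred := (x : WithBot P.VG)
/-- Inclusion of the vertices of `G^{A,B}_red` into those of `G^{A,B}`. -/
def liftW (x : P.Vred) : P.W := (x : WithBot P.Vred)

/-- The edges of the biconed graph `G^{A,B}`:  the edge `00̄`, the coning
edges `0a (a ∈ A)`, `0̄b (b ∈ Ā)`, `0̄a (a ∈ A ∩ B)`, and the edges of `G`. -/
abbrev EB := Unit ⊕ (Fin P.m ⊕ (Fin P.n ⊕ ({a : Fin P.m // a ∈ P.S} ⊕ P.E)))

/-- The edge `00̄`. -/
abbrev e00 : P.EB := Sum.inl ()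
/-- The coning edge `0a`, `a ∈ A`. -/
abbrev eA (a : Fin P.m) : P.EB := Sum.inr (Sum.inl a)
/-- The coning edge `0̄b`, `b ∈ Ā`. -/
abbrev eB (b : Fin P.n) : P.EB := Sum.inr (Sum.inr (Sum.inl b))
/-- The coning edge `0̄a`, `a ∈ A ∩ B`. -/
abbrev eS (a : {a : Fin P.m // a ∈ P.S}) : P.EB := Sum.inr (Sum.inr (Sum.inr (Sum.inl a)))
/-- An original edge of `G`. -/
abbrev eG (e : P.E) : P.EB := Sum.inr (Sum.inr (Sum.inr (Sum.inr e)))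

/-- The endpoint map of `G^{A,B}`. -/
def endsB : P.EB → Sym2 P.W
  | Sum.inl _ => s((⊥ : P.W), P.liftW ⊥)
  | Sum.inr (Sum.inl a) => s((⊥ : P.W), P.liftW (P.liftV (P.aVert a)))
  | Sum.inr (Sum.inr (Sum.inl b)) => s(P.liftW ⊥, P.liftW (P.liftV (P.bVert b)))
  | Sum.inr (Sum.inr (Sum.inr (Sum.inl a))) => s(P.liftW ⊥, P.liftW (P.liftV (P.aVert a.1)))
  | Sum.inr (Sum.inr (Sum.inr (Sum.inr e))) => (P.ends e).map fun x => P.liftW (P.liftV x)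

/-- The spanning tree `T₀`, consisting of `00̄`, the edges `0a (a ∈ A)` and
the edges `0̄b (b ∈ Ā)`. -/
def T0 : Finset P.EB :=
  Finset.univ.filter fun e => match e with
    | Sum.inl _ => True
    | Sum.inr (Sum.inl _) => True
    | Sum.inr (Sum.inr (Sum.inl _)) => True
    | _ => False

/-- The edges of `G^{A,B}_red` (delete the edges of `T₀` and the vertex `0`):
the edges `0̄a (a ∈ A ∩ B)` together with the edges of `G`. -/
abbrev Ered := {a : Fin P.m // a ∈ P.S} ⊕ P.E

/-- The endpoint map of `G^{A,B}_red`; `⊥` is the vertex `0̄`. -/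
def endsRed : P.Ered → Sym2 P.Vred
  | Sum.inl a => s((⊥ : P.Vred), P.liftV (P.aVert a.1))
  | Sum.inr e => (P.ends e).map P.liftV

/-- Inclusion of the edges of `G^{A,B}_red` into those of `G^{A,B}`. -/
def redToEB : P.Ered → P.EB
  | Sum.inl a => P.eS a
  | Sum.inr e => P.eG e

/-- The edge set `T \ T₀` of `T`, viewed inside `G^{A,B}_red`. -/
def redOf (T : Finset P.EB) : Finset P.Ered :=
  Finset.univ.filter fun e => P.redToEB e ∈ T

/-- `true` on the vertices of `A`, `false` on the vertices of `Ā ∪ {0̄}`. -/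
def side : P.Vred → Bool :=
  WithBot.recBotCoe false fun x => Sum.elim (fun _ => true) (fun _ => false) (ofLex x)

/-- The vertex lies in `A`. -/
def InA (v : P.Vred) : Prop := ∃ a : Fin P.m, v = P.liftV (P.aVert a)

/-- An edge of `G^{A,B}_red` is bridging if it joins a vertex of `A` to a
vertex of `Ā ∪ {0̄}`. -/
def BridgingE (e : P.Ered) : Prop :=
  ∃ u v : P.Vred, P.endsRed e = s(u, v) ∧ P.side u ≠ P.side v

/-! ### 2-edge-rooted forests -/

/-- The underlying edge set `F` of the multiset of edges given by the
multiplicity function `mult` (an edge `e` carries `mult e - 1` edge roots). -/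
def mSupport (mult : P.Ered → ℕ) : Finset P.Ered :=
  Finset.univ.filter fun e => mult e ≠ 0

/-- The degree of the multiset of edges given by `mult`. -/
def deg (mult : P.Ered → ℕ) : ℕ := ∑ e : P.Ered, mult e

/-- Edge `e` meets the connected component of `v` in the edge set `F`. -/
def Touches (F : Finset P.Ered) (v : P.Vred) (e : P.Ered) : Prop :=
  ∃ u : P.Vred, u ∈ P.endsRed e ∧ Reachable P.endsRed F v u

/-- The total number of edge roots in the component of `v`. -/
def compEdgeRoots (mult : P.Ered → ℕ) (v : P.Vred) : ℕ :=
  ∑ e ∈ P.mSupport mult, if P.Touches (P.mSupport mult) v e then mult e - 1 else 0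

/-- The component of `v` is `compCount`-edge-rooted:  the number of its edge
roots, plus `1` if it contains the vertex `0̄`. -/
def compCount (mult : P.Ered → ℕ) (v : P.Vred) : ℕ :=
  P.compEdgeRoots mult v +
    if Reachable P.endsRed (P.mSupport mult) v (⊥ : P.Vred) then 1 else 0

/-- Condition (C3) for the `2`-edge-rooted component of `v`:  the unique
shortest path containing both edge roots (resp. the vertex `0̄` and the edge
root, if the component contains `0̄`) has an odd number of bridging edges.
The shortest path containing two edges is the unique path whose first and
last edges are the two rooted edges; if the two edge roots lie on one common
edge (`mult e = 3`) the path is that single edge. -/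
def C3At (mult : P.Ered → ℕ) (v : P.Vred) : Prop :=
  (Reachable P.endsRed (P.mSupport mult) v (⊥ : P.Vred) →
    ∃ (x : P.Vred) (p : MWalk P.endsRed (⊥ : P.Vred) x),
      p.IsPath ∧ p.edgesIn (P.mSupport mult) ∧
      (∃ e, p.edges.getLast? = some e ∧ 2 ≤ mult e) ∧
      Odd (p.bridgeCount P.side)) ∧
  (¬ Reachable P.endsRed (P.mSupport mult) v (⊥ : P.Vred) →
    ∃ (x y : P.Vred) (p : MWalk P.endsRed x y),
      p.IsPath ∧ p.edgesIn (P.mSupport mult) ∧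
      Reachable P.endsRed (P.mSupport mult) v x ∧
      (∃ e, p.edges.head? = some e ∧ 2 ≤ mult e) ∧
      (∃ e, p.edges.getLast? = some e ∧ 2 ≤ mult e) ∧
      (∀ e, p.edges = [e] → mult e = 3) ∧
      Odd (p.bridgeCount P.side))

/-- `mult : Ered → ℕ` is (the multiplicity function of) a 2-edge-rooted
forest of `G^{A,B}_red`:
(C0) its support is a spanning forest;
(C1) at most one component is `2`-edge-rooted;
(C2) every other component is `0`- or `1`-edge-rooted;
(C3) the parity condition on the path joining the two roots. -/
def Is2ERF (mult : P.Ered → ℕ) : Prop :=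
  IsAcyclic P.endsRed (P.mSupport mult) ∧
  (∀ v : P.Vred, P.compCount mult v ≤ 2) ∧
  (∀ u v : P.Vred, P.compCount mult u = 2 → P.compCount mult v = 2 →
    Reachable P.endsRed (P.mSupport mult) u v) ∧
  (∀ v : P.Vred, P.compCount mult v = 2 → P.C3At mult v)

/-! ### Birooted forests -/

/-- `(F, R)` is a birooted forest of `G^{A,B}_red`:  `F` is a spanning forest,
the root set `R` contains `0̄`, every component of `F` contains at least one
root, no component contains three roots, at most one component contains two
roots, and a component with two roots has one root in `A` and the other in
`Ā ∪ {0̄}`. -/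
def IsBirootedForest (F : Finset P.Ered) (R : Set P.Vred) : Prop :=
  IsAcyclic P.endsRed F ∧
  (⊥ : P.Vred) ∈ R ∧
  (∀ v : P.Vred, ∃ r ∈ R, Reachable P.endsRed F v r) ∧
  (∀ r₁ ∈ R, ∀ r₂ ∈ R, ∀ r₃ ∈ R, r₁ ≠ r₂ → r₁ ≠ r₃ → r₂ ≠ r₃ →
    Reachable P.endsRed F r₁ r₂ → Reachable P.endsRed F r₁ r₃ → False) ∧
  (∀ r₁ ∈ R, ∀ r₂ ∈ R, ∀ r₃ ∈ R, ∀ r₄ ∈ R, r₁ ≠ r₂ → r₃ ≠ r₄ →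
    Reachable P.endsRed F r₁ r₂ → Reachable P.endsRed F r₃ r₄ →
    Reachable P.endsRed F r₁ r₃) ∧
  (∀ r₁ ∈ R, ∀ r₂ ∈ R, r₁ ≠ r₂ → Reachable P.endsRed F r₁ r₂ →
    (P.InA r₁ ∧ ¬ P.InA r₂) ∨ (P.InA r₂ ∧ ¬ P.InA r₁))

/-! ### Internal activity and the edge order -/

/-- `e` is internally passive in the spanning tree `T`:  it can be exchanged
for a strictly smaller edge `f` so that the result is again a spanning tree. -/
def InternallyPassive (ord : LinearOrder P.EB) (T : Finset P.EB) (e : P.EB) : Prop :=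
  e ∈ T ∧ ∃ f : P.EB, ord.lt f e ∧ IsSpanningTree P.endsB (insert f (T.erase e))

/-- `e` is internally active in the spanning tree `T`. -/
def InternallyActive (ord : LinearOrder P.EB) (T : Finset P.EB) (e : P.EB) : Prop :=
  e ∈ T ∧ ¬ ∃ f : P.EB, ord.lt f e ∧ IsSpanningTree P.endsB (insert f (T.erase e))

/-- The number of internally passive edges of `T`. -/
def ipCount (ord : LinearOrder P.EB) (T : Finset P.EB) : ℕ :=
  (T.filter fun e => P.InternallyPassive ord T e).card

/-- The smaller endpoint of an edge of `G^{A,B}`. -/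
def endMin (e : P.EB) : P.W := Sym2.lift ⟨fun a b => a ⊓ b, fun a b => inf_comm a b⟩ (P.endsB e)
/-- The larger endpoint of an edge of `G^{A,B}`. -/
def endMax (e : P.EB) : P.W := Sym2.lift ⟨fun a b => a ⊔ b, fun a b => sup_comm a b⟩ (P.endsB e)

/-- The endpoints of an edge, as an ordered pair in the lexicographic square
of the vertex order `0 < 0̄ < 1 < ⋯ < m < 1̄ < ⋯ < n̄`. -/
def lexEnds (e : P.EB) : P.W ×ₗ P.W := toLex (P.endMin e, P.endMax e)

/-- A linear order on the edges of `G^{A,B}` is admissible if it refines the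
lexicographic order on endpoints (so parallel edges are ordered arbitrarily). -/
def AdmissibleOrder (ord : LinearOrder P.EB) : Prop :=
  ∀ e f : P.EB, P.lexEnds e < P.lexEnds f → ord.lt e f

/-- `v` is a connecting vertex of `T`:  `v ∈ A` and `v` is adjacent to `0` in
`T`, or `v ∈ Ā` and `v` is adjacent to `0̄` in `T`. -/
def ConnVertex (T : Finset P.EB) (v : P.Vred) : Prop :=
  (∃ a : Fin P.m, v = P.liftV (P.aVert a) ∧ P.eA a ∈ T) ∨
  (∃ b : Fin P.n, v = P.liftV (P.bVert b) ∧ P.eB b ∈ T)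

/-- `e` is a connecting edge of `T` (an edge `0a`, `a ∈ A`, or `0̄b`, `b ∈ Ā`)
with connecting vertex `v`. -/
def ConnEdge (T : Finset P.EB) (e : P.EB) (v : P.Vred) : Prop :=
  e ∈ T ∧ ((∃ a : Fin P.m, e = P.eA a ∧ v = P.liftV (P.aVert a)) ∨
           (∃ b : Fin P.n, e = P.eB b ∧ v = P.liftV (P.bVert b)))

/-! ### The h-vector -/

/-- `f_{i-1}`:  the number of acyclic edge sets of cardinality `i` in `G^{A,B}`. -/
def numAcyclic (i : ℕ) : ℕ :=
  Nat.card {F : Finset P.EB // IsAcyclic P.endsB F ∧ F.card = i}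

/-- The rank of the graphic matroid of `G^{A,B}`:  `|V| - 1 = m + n + 1`. -/
def d : ℕ := P.m + P.n + 1

/-- `h` is the h-vector of the graphic matroid of `G^{A,B}`:  it satisfies
`Σ_{i=0}^{d} f_{i-1} (t-1)^{d-i} = Σ_{k=0}^{d} h_k t^{d-k}`. -/
def IsHVector (h : ℕ → ℤ) : Prop :=
  ∑ i ∈ Finset.range (P.d + 1),
      Polynomial.C ((P.numAcyclic i : ℤ)) * (Polynomial.X - 1) ^ (P.d - i)
    = ∑ k ∈ Finset.range (P.d + 1), Polynomial.C (h k) * Polynomial.X ^ (P.d - k)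

end BiconedGraph

/-- `(h 0, …, h d)` is a pure O-sequence:  there is a multicomplex `M` of
multisets on a finite ground set (nonempty, closed under sub-multisets), all
of whose inclusion-maximal members have the same cardinality, whose members
all have cardinality at most `d`, and which has exactly `h i` members of
cardinality `i` for every `i ≤ d`. -/
def IsPureOSeq (d : ℕ) (h : ℕ → ℤ) : Prop :=
  ∃ (N : ℕ) (M : Set (Multiset (Fin N))),
    M.Nonempty ∧
    (∀ s ∈ M, ∀ t : Multiset (Fin N), t ≤ s → t ∈ M) ∧
    (∀ s ∈ M, ∀ t ∈ M, (∀ u ∈ M, s ≤ u → u = s) → (∀ u ∈ M, t ≤ u → u = t) →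
      Multiset.card s = Multiset.card t) ∧
    (∀ s ∈ M, Multiset.card s ≤ d) ∧
    (∀ i ≤ d, (Nat.card {s : Multiset (Fin N) // s ∈ M ∧ Multiset.card s = i} : ℤ) = h i)


/-! ### Auxiliary lemmas for Statement 13 -/

section Aux13

variable {ε ν : Type} {ends : ε → Sym2 ν}

namespace MWalk

/-- Concatenation of walks. -/
def append : ∀ {u v w : ν}, MWalk ends u v → MWalk ends v w → MWalk ends u w
  | _, _, _, nil _, q => q
  | _, _, _, cons e x h p, q => cons e x h (append p q)

theorem edges_append : ∀ {u v w : ν} (p : MWalk ends u v) (q : MWalk ends v w),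
    (p.append q).edges = p.edges ++ q.edges
  | _, _, _, nil _, _ => rfl
  | _, _, _, cons e x h p, q => by
      simp [append, edges, edges_append p q]

/-- Reversal of a walk. -/
def reverse : ∀ {u v : ν}, MWalk ends u v → MWalk ends v u
  | _, _, nil u => nil u
  | _, _, cons e _ h p =>
      (reverse p).append (cons e _ (by rw [h, Sym2.eq_swap]) (nil _))

theorem mem_edges_reverse : ∀ {u v : ν} (p : MWalk ends u v) {f : ε},
    f ∈ (reverse p).edges → f ∈ p.edges
  | _, _, nil _, _, hf => hf
  | _, _, cons e x h p, f, hf => by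
      rw [reverse, edges_append] at hf
      rcases List.mem_append.1 hf with hf | hf
      · exact List.mem_cons_of_mem _ (mem_edges_reverse p hf)
      · simp only [edges] at hf
        simp only [List.mem_singleton] at hf
        subst hf; exact List.mem_cons_self

end MWalk

theorem reach_refl {F : Finset ε} (u : ν) : Reachable ends F u u :=
  ⟨MWalk.nil u, fun _ he => absurd he List.not_mem_nil⟩

theorem reach_trans {F : Finset ε} {u v w : ν}
    (h₁ : Reachable ends F u v) (h₂ : Reachable ends F v w) : Reachable ends F u w := by
  obtain ⟨p, hp⟩ := h₁; obtain ⟨q, hq⟩ := h₂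
  refine ⟨p.append q, fun f hf => ?_⟩
  rw [MWalk.edges_append] at hf
  rcases List.mem_append.1 hf with hf | hf
  · exact hp f hf
  · exact hq f hf

theorem reach_symm {F : Finset ε} {u v : ν}
    (h : Reachable ends F u v) : Reachable ends F v u := by
  obtain ⟨p, hp⟩ := h
  exact ⟨p.reverse, fun f hf => hp f (MWalk.mem_edges_reverse p hf)⟩

theorem reach_single {F : Finset ε} {e : ε} {u v : ν} (he : e ∈ F)
    (h : ends e = s(u, v)) : Reachable ends F u v := by
  refine ⟨MWalk.cons e v h (MWalk.nil v), fun f hf => ?_⟩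
  simp only [MWalk.edges, List.mem_singleton] at hf
  subst hf; exact he

theorem sym2_rep (s : Sym2 ν) : ∃ x y, s = s(x, y) :=
  Sym2.inductionOn s fun x y => ⟨x, y, rfl⟩

end Aux13

namespace BiconedGraph

variable (P : BiconedGraph)

theorem liftW_inj : Function.Injective P.liftW := fun _ _ h => by
  simpa [liftW] using h

theorem liftV_inj : Function.Injective P.liftV := fun _ _ h => by
  simpa [liftV] using h

theorem liftW_ne_bot (x : P.Vred) : P.liftW x ≠ (⊥ : P.W) := WithBot.coe_ne_bot

theorem liftV_ne_bot (x : P.VG) : P.liftV x ≠ (⊥ : P.Vred) := WithBot.coe_ne_bot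

theorem aVert_ne_bVert (a : Fin P.m) (b : Fin P.n) : P.aVert a ≠ P.bVert b := by
  simp [aVert, bVert]

theorem eA_injective : Function.Injective P.eA := fun a b h => by simpa using h

theorem eB_injective : Function.Injective P.eB := fun a b h => by simpa using h

theorem redToEB_inj : Function.Injective P.redToEB := by
  rintro (a | e) (b | f) h <;> simp [redToEB] at h <;> simp [h]

theorem redToEB_ne_eA (f : P.Ered) (a : Fin P.m) : P.redToEB f ≠ P.eA a := by
  cases f <;> simp [redToEB]

theorem redToEB_ne_eB (f : P.Ered) (b : Fin P.n) : P.redToEB f ≠ P.eB b := by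
  cases f <;> simp [redToEB]

theorem mem_redOf {T : Finset P.EB} {f : P.Ered} :
    f ∈ P.redOf T ↔ P.redToEB f ∈ T := by simp [redOf]

theorem endsB_redToEB (f : P.Ered) :
    P.endsB (P.redToEB f) = (P.endsRed f).map P.liftW := by
  cases f with
  | inl a => rfl
  | inr e =>
      show (P.ends e).map (fun x => P.liftW (P.liftV x)) = ((P.ends e).map P.liftV).map P.liftW
      rw [Sym2.map_map]
      rfl

/-- Lifting a walk of `G^{A,B}_red` to `G^{A,B}`. -/
def liftWalk : ∀ {u v : P.Vred}, MWalk P.endsRed u v →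
    MWalk P.endsB (P.liftW u) (P.liftW v)
  | _, _, .nil u => .nil _
  | _, _, .cons e x h p =>
      .cons (P.redToEB e) (P.liftW x)
        (by rw [P.endsB_redToEB, h, Sym2.map_pair_eq]) (liftWalk p)

theorem liftWalk_edges : ∀ {u v : P.Vred} (p : MWalk P.endsRed u v),
    (P.liftWalk p).edges = p.edges.map P.redToEB
  | _, _, .nil u => rfl
  | _, _, .cons e x h p => by
      simp [liftWalk, MWalk.edges, liftWalk_edges p]

theorem liftReach {F : Finset P.Ered} {G' : Finset P.EB}
    (hFG : ∀ f ∈ F, P.redToEB f ∈ G') {u v : P.Vred}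
    (h : Reachable P.endsRed F u v) :
    Reachable P.endsB G' (P.liftW u) (P.liftW v) := by
  obtain ⟨p, hp⟩ := h
  refine ⟨P.liftWalk p, fun e he => ?_⟩
  rw [P.liftWalk_edges] at he
  obtain ⟨f, hf, rfl⟩ := List.mem_map.1 he
  exact hFG f (hp f hf)

/-- A root anchored at `0` via an edge `0a`. -/
def Anchor0 (T : Finset P.EB) (r : P.Vred) : Prop :=
  ∃ a, r = P.liftV (P.aVert a) ∧ P.eA a ∈ T

/-- A root anchored at `0̄`: either `0̄` itself or via an edge `0̄b`, `b ∈ Ā`. -/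
def AnchorB (T : Finset P.EB) (r : P.Vred) : Prop :=
  r = (⊥ : P.Vred) ∨ ∃ b, r = P.liftV (P.bVert b) ∧ P.eB b ∈ T

theorem anchor_excl {T : Finset P.EB} {r : P.Vred}
    (h₀ : P.Anchor0 T r) (h₁ : P.AnchorB T r) : False := by
  obtain ⟨a, rfl, -⟩ := h₀
  rcases h₁ with h | ⟨b, hb, -⟩
  · exact P.liftV_ne_bot _ h
  · exact P.aVert_ne_bVert a b (P.liftV_inj hb)

theorem root_anchor {T : Finset P.EB} {r : P.Vred}
    (h : r = (⊥ : P.Vred) ∨ P.ConnVertex T r) :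
    P.Anchor0 T r ∨ P.AnchorB T r := by
  rcases h with h | h
  · exact Or.inr (Or.inl h)
  · simp only [ConnVertex] at h
    rcases h with ⟨a, ha, haT⟩ | ⟨b, hb, hbT⟩
    · exact Or.inl ⟨a, ha, haT⟩
    · exact Or.inr (Or.inr ⟨b, hb, hbT⟩)

theorem anchor0_inA {T : Finset P.EB} {r : P.Vred} (h : P.Anchor0 T r) : P.InA r := by
  obtain ⟨a, ha, -⟩ := h; exact ⟨a, ha⟩

theorem anchorB_notA {T : Finset P.EB} {r : P.Vred} (h : P.AnchorB T r) : ¬ P.InA r := by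
  rintro ⟨a, rfl⟩
  rcases h with h | ⟨b, hb, -⟩
  · exact P.liftV_ne_bot _ h
  · exact P.aVert_ne_bVert a b (P.liftV_inj hb)

theorem anchorB_reach {T : Finset P.EB} {r : P.Vred} {G' : Finset P.EB}
    (h : P.AnchorB T r) (hG : ∀ b, P.eB b ∈ T → P.eB b ∈ G') :
    Reachable P.endsB G' (P.liftW (⊥ : P.Vred)) (P.liftW r) := by
  rcases h with rfl | ⟨b, rfl, hbT⟩
  · exact reach_refl _
  · exact reach_single (hG b hbT) rfl

theorem key {T : Finset P.EB} (hT : IsSpanningTree P.endsB T) {r₁ r₂ : P.Vred}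
    (h₁ : P.Anchor0 T r₁ ∨ P.AnchorB T r₁) (h₂ : P.Anchor0 T r₂ ∨ P.AnchorB T r₂)
    (hne : r₁ ≠ r₂) (hre : Reachable P.endsRed (P.redOf T) r₁ r₂) :
    (P.Anchor0 T r₁ ∧ P.AnchorB T r₂) ∨ (P.AnchorB T r₁ ∧ P.Anchor0 T r₂) := by
  rcases h₁ with h₁ | h₁ <;> rcases h₂ with h₂ | h₂
  · exfalso
    obtain ⟨a₁, rfl, ha₁⟩ := h₁
    obtain ⟨a₂, rfl, ha₂⟩ := h₂
    have hane : a₁ ≠ a₂ := fun h => hne (by rw [h])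
    have hred : ∀ f ∈ P.redOf T, P.redToEB f ∈ T.erase (P.eA a₁) := fun f hf =>
      Finset.mem_erase.2 ⟨P.redToEB_ne_eA f a₁, P.mem_redOf.1 hf⟩
    refine hT.1 (P.eA a₁) ha₁ (⊥ : P.W) (P.liftW (P.liftV (P.aVert a₁))) rfl ?_
    refine reach_trans (reach_single (e := P.eA a₂)
      (Finset.mem_erase.2 ⟨fun h => hane (P.eA_injective h).symm, ha₂⟩) rfl) ?_
    exact reach_symm (P.liftReach hred hre)
  · exact Or.inl ⟨h₁, h₂⟩
  · exact Or.inr ⟨h₁, h₂⟩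
  · exfalso
    rcases h₁ with rfl | ⟨b₁, rfl, hb₁⟩
    · rcases h₂ with rfl | ⟨b₂, rfl, hb₂⟩
      · exact hne rfl
      · have hred : ∀ f ∈ P.redOf T, P.redToEB f ∈ T.erase (P.eB b₂) := fun f hf =>
          Finset.mem_erase.2 ⟨P.redToEB_ne_eB f b₂, P.mem_redOf.1 hf⟩
        exact hT.1 (P.eB b₂) hb₂ (P.liftW (⊥ : P.Vred))
          (P.liftW (P.liftV (P.bVert b₂))) rfl (P.liftReach hred hre)
    · have hred : ∀ f ∈ P.redOf T, P.redToEB f ∈ T.erase (P.eB b₁) := fun f hf =>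
        Finset.mem_erase.2 ⟨P.redToEB_ne_eB f b₁, P.mem_redOf.1 hf⟩
      refine hT.1 (P.eB b₁) hb₁ (P.liftW (⊥ : P.Vred))
        (P.liftW (P.liftV (P.bVert b₁))) rfl ?_
      rcases h₂ with rfl | ⟨b₂, rfl, hb₂⟩
      · exact P.liftReach hred (reach_symm hre)
      · have hbne : b₁ ≠ b₂ := fun h => hne (by rw [h])
        refine reach_trans (reach_single (e := P.eB b₂)
          (Finset.mem_erase.2 ⟨fun h => hbne (P.eB_injective h).symm, hb₂⟩) rfl) ?_
        exact reach_symm (P.liftReach hred hre)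

theorem core {T : Finset P.EB} (hT : IsSpanningTree P.endsB T) {r₁ r₂ r₃ r₄ : P.Vred}
    (h₁ : P.Anchor0 T r₁) (h₂ : P.AnchorB T r₂)
    (h₃ : P.Anchor0 T r₃) (h₄ : P.AnchorB T r₄)
    (h12 : Reachable P.endsRed (P.redOf T) r₁ r₂)
    (h34 : Reachable P.endsRed (P.redOf T) r₃ r₄) :
    Reachable P.endsRed (P.redOf T) r₁ r₃ := by
  obtain ⟨a₁, rfl, ha₁⟩ := h₁
  obtain ⟨a₃, rfl, ha₃⟩ := h₃
  by_cases hae : a₁ = a₃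
  · subst hae; exact reach_refl _
  exfalso
  have hred : ∀ f ∈ P.redOf T, P.redToEB f ∈ T.erase (P.eA a₁) := fun f hf =>
    Finset.mem_erase.2 ⟨P.redToEB_ne_eA f a₁, P.mem_redOf.1 hf⟩
  have hB : ∀ b, P.eB b ∈ T → P.eB b ∈ T.erase (P.eA a₁) := fun b hb =>
    Finset.mem_erase.2 ⟨by simp, hb⟩
  refine hT.1 (P.eA a₁) ha₁ (⊥ : P.W) (P.liftW (P.liftV (P.aVert a₁))) rfl ?_
  have s1 : Reachable P.endsB (T.erase (P.eA a₁)) (⊥ : P.W)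
      (P.liftW (P.liftV (P.aVert a₃))) :=
    reach_single (Finset.mem_erase.2 ⟨fun h => hae (P.eA_injective h).symm, ha₃⟩) rfl
  have s2 := P.liftReach hred h34
  have s3 := reach_symm (P.anchorB_reach h₄ hB)
  have s4 := P.anchorB_reach h₂ hB
  have s5 := reach_symm (P.liftReach hred h12)
  exact reach_trans s1 (reach_trans s2 (reach_trans s3 (reach_trans s4 s5)))

theorem reach_root {T : Finset P.EB} :
    ∀ {w t : P.W} (p : MWalk P.endsB w t), p.edgesIn T → ∀ u : P.Vred, w = P.liftW u →
    (∃ r, (r = (⊥ : P.Vred) ∨ P.ConnVertex T r) ∧ Reachable P.endsRed (P.redOf T) u r) ∨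
    (∃ u', t = P.liftW u' ∧ Reachable P.endsRed (P.redOf T) u u') := by
  intro w t p
  induction p with
  | nil x => exact fun _ u hu => Or.inr ⟨u, hu, reach_refl _⟩
  | cons e v' h p ih =>
    intro hp u hu
    subst hu
    have heT : e ∈ T := hp e List.mem_cons_self
    have hp' : p.edgesIn T := fun f hf => hp f (List.mem_cons_of_mem _ hf)
    rcases e with u0 | a | b | sa | e'
    · replace h : s((⊥ : P.W), P.liftW (⊥ : P.Vred)) = s(P.liftW u, v') := h
      rw [Sym2.eq_iff] at h
      rcases h with ⟨h1, h2⟩ | ⟨h1, h2⟩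
      · exact absurd h1.symm (P.liftW_ne_bot u)
      · exact Or.inl ⟨u, Or.inl (P.liftW_inj h2).symm, reach_refl _⟩
    · replace h : s((⊥ : P.W), P.liftW (P.liftV (P.aVert a))) = s(P.liftW u, v') := h
      rw [Sym2.eq_iff] at h
      rcases h with ⟨h1, h2⟩ | ⟨h1, h2⟩
      · exact absurd h1.symm (P.liftW_ne_bot u)
      · exact Or.inl ⟨u, Or.inr (Or.inl ⟨a, (P.liftW_inj h2).symm, heT⟩), reach_refl _⟩
    · replace h : s(P.liftW (⊥ : P.Vred), P.liftW (P.liftV (P.bVert b))) = s(P.liftW u, v') := h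
      rw [Sym2.eq_iff] at h
      rcases h with ⟨h1, h2⟩ | ⟨h1, h2⟩
      · exact Or.inl ⟨u, Or.inl (P.liftW_inj h1).symm, reach_refl _⟩
      · exact Or.inl ⟨u, Or.inr (Or.inr ⟨b, (P.liftW_inj h2).symm, heT⟩), reach_refl _⟩
    · replace h : s(P.liftW (⊥ : P.Vred), P.liftW (P.liftV (P.aVert sa.1))) = s(P.liftW u, v') := h
      rw [Sym2.eq_iff] at h
      have hmem : (Sum.inl sa : P.Ered) ∈ P.redOf T := P.mem_redOf.2 heT
      rcases h with ⟨h1, h2⟩ | ⟨h1, h2⟩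
      · -- u = ⊥, v' = liftW (aVert sa)
        obtain rfl : u = (⊥ : P.Vred) := (P.liftW_inj h1).symm
        have step : Reachable P.endsRed (P.redOf T) (⊥ : P.Vred) (P.liftV (P.aVert sa.1)) :=
          reach_single hmem rfl
        rcases ih hp' (P.liftV (P.aVert sa.1)) h2.symm with ⟨r, hr, hre⟩ | ⟨u', hu', hre⟩
        · exact Or.inl ⟨r, hr, reach_trans step hre⟩
        · exact Or.inr ⟨u', hu', reach_trans step hre⟩
      · obtain rfl : u = P.liftV (P.aVert sa.1) := (P.liftW_inj h2).symm
        have step : Reachable P.endsRed (P.redOf T) (P.liftV (P.aVert sa.1)) (⊥ : P.Vred) :=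
          reach_symm (reach_single hmem rfl)
        rcases ih hp' (⊥ : P.Vred) h1.symm with ⟨r, hr, hre⟩ | ⟨u', hu', hre⟩
        · exact Or.inl ⟨r, hr, reach_trans step hre⟩
        · exact Or.inr ⟨u', hu', reach_trans step hre⟩
    · obtain ⟨x, y, hxy⟩ := sym2_rep (P.ends e')
      replace h : s(P.liftW (P.liftV x), P.liftW (P.liftV y)) = s(P.liftW u, v') := by
        have : P.endsB (P.eG e') = s(P.liftW (P.liftV x), P.liftW (P.liftV y)) := by
          show (P.ends e').map (fun z => P.liftW (P.liftV z)) = _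
          rw [hxy, Sym2.map_pair_eq]
        rw [← this]; exact h
      rw [Sym2.eq_iff] at h
      have hmem : (Sum.inr e' : P.Ered) ∈ P.redOf T := P.mem_redOf.2 heT
      have hends : P.endsRed (Sum.inr e') = s(P.liftV x, P.liftV y) := by
        show (P.ends e').map P.liftV = _
        rw [hxy, Sym2.map_pair_eq]
      rcases h with ⟨h1, h2⟩ | ⟨h1, h2⟩
      · obtain rfl : u = P.liftV x := (P.liftW_inj h1).symm
        have step : Reachable P.endsRed (P.redOf T) (P.liftV x) (P.liftV y) :=
          reach_single hmem hends
        rcases ih hp' (P.liftV y) h2.symm with ⟨r, hr, hre⟩ | ⟨u', hu', hre⟩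
        · exact Or.inl ⟨r, hr, reach_trans step hre⟩
        · exact Or.inr ⟨u', hu', reach_trans step hre⟩
      · obtain rfl : u = P.liftV y := (P.liftW_inj h2).symm
        have step : Reachable P.endsRed (P.redOf T) (P.liftV y) (P.liftV x) :=
          reach_symm (reach_single hmem hends)
        rcases ih hp' (P.liftV x) h1.symm with ⟨r, hr, hre⟩ | ⟨u', hu', hre⟩
        · exact Or.inl ⟨r, hr, reach_trans step hre⟩
        · exact Or.inr ⟨u', hu', reach_trans step hre⟩

end BiconedGraph


/-- well-definedness of `φ₁` in Lemma 3.4.  For a spanning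
tree `T` of `G^{A,B}`, the spanning forest `T \\ T₀` of `G^{A,B}_red`, with
roots the vertex `0̄` together with all connecting vertices of `T`, is a
birooted forest of `G^{A,B}_red`:  every component contains at least one
root, at most one component contains two roots, and in a component with two
roots one root lies in `A` and the other in `Ā ∪ {0̄}`. -/
theorem redOf_spanningTree_birooted (P : BiconedGraph)
    (T : Finset P.EB) (hT : IsSpanningTree P.endsB T) :
    P.IsBirootedForest (P.redOf T)
      {v : P.Vred | v = (⊥ : P.Vred) ∨ P.ConnVertex T v} := by
  refine ⟨?_, ?_, ?_, ?_, ?_, ?_⟩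
  · -- acyclicity
    intro e he u v hev hre
    obtain ⟨p, hp⟩ := hre
    refine hT.1 (P.redToEB e) (P.mem_redOf.1 he) (P.liftW u) (P.liftW v)
      (by rw [P.endsB_redToEB, hev, Sym2.map_pair_eq]) ⟨P.liftWalk p, ?_⟩
    intro f hf
    rw [P.liftWalk_edges] at hf
    obtain ⟨g, hg, rfl⟩ := List.mem_map.1 hf
    have hg' := hp g hg
    rw [Finset.mem_erase] at hg'
    exact Finset.mem_erase.2 ⟨fun hh => hg'.1 (P.redToEB_inj hh), P.mem_redOf.1 hg'.2⟩
  · exact Or.inl rfl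
  · -- every component contains a root
    intro v
    obtain ⟨p, hp⟩ := hT.2 (P.liftW v) (⊥ : P.W)
    rcases P.reach_root p hp v rfl with ⟨r, hr, hre⟩ | ⟨u', hu', -⟩
    · exact ⟨r, hr, hre⟩
    · exact absurd hu'.symm (P.liftW_ne_bot u')
  · -- no three roots in a component
    intro r₁ hr₁ r₂ hr₂ r₃ hr₃ hne12 hne13 hne23 hRe12 hRe13
    have a₁ := P.root_anchor hr₁
    have a₂ := P.root_anchor hr₂
    have a₃ := P.root_anchor hr₃
    have hRe23 : Reachable P.endsRed (P.redOf T) r₂ r₃ :=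
      reach_trans (reach_symm hRe12) hRe13
    have k12 := P.key hT a₁ a₂ hne12 hRe12
    have k13 := P.key hT a₁ a₃ hne13 hRe13
    have k23 := P.key hT a₂ a₃ hne23 hRe23
    rcases k12 with ⟨p1, p2⟩ | ⟨p1, p2⟩ <;> rcases k13 with ⟨q1, q3⟩ | ⟨q1, q3⟩ <;>
      rcases k23 with ⟨s2, s3⟩ | ⟨s2, s3⟩ <;>
      first
        | exact P.anchor_excl p1 q1
        | exact P.anchor_excl q1 p1
        | exact P.anchor_excl p2 s2
        | exact P.anchor_excl s2 p2
        | exact P.anchor_excl q3 s3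
        | exact P.anchor_excl s3 q3
  · -- at most one doubly-rooted component
    intro r₁ hr₁ r₂ hr₂ r₃ hr₃ r₄ hr₄ hne12 hne34 hRe12 hRe34
    have a₁ := P.root_anchor hr₁
    have a₂ := P.root_anchor hr₂
    have a₃ := P.root_anchor hr₃
    have a₄ := P.root_anchor hr₄
    have k12 := P.key hT a₁ a₂ hne12 hRe12
    have k34 := P.key hT a₃ a₄ hne34 hRe34
    rcases k12 with ⟨p1, p2⟩ | ⟨p1, p2⟩ <;> rcases k34 with ⟨q3, q4⟩ | ⟨q3, q4⟩
    · exact P.core hT p1 p2 q3 q4 hRe12 hRe34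
    · exact reach_trans (P.core hT p1 p2 q4 q3 hRe12 (reach_symm hRe34))
        (reach_symm hRe34)
    · exact reach_trans hRe12 (P.core hT p2 p1 q3 q4 (reach_symm hRe12) hRe34)
    · exact reach_trans hRe12
        (reach_trans (P.core hT p2 p1 q4 q3 (reach_symm hRe12) (reach_symm hRe34))
          (reach_symm hRe34))
  · -- the two roots lie on opposite sides
    intro r₁ hr₁ r₂ hr₂ hne hRe
    rcases P.key hT (P.root_anchor hr₁) (P.root_anchor hr₂) hne hRe with ⟨p1, p2⟩ | ⟨p1, p2⟩
    · exact Or.inl ⟨P.anchor0_inA p1, P.anchorB_notA p2⟩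
    · exact Or.inr ⟨P.anchor0_inA p2, P.anchorB_notA p1⟩


end

end BiconedPaper
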